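/- Let d ≥ 3 and ε > 0. There exists C = C(d,ε) > 0 such that for every graph G on [n] with diameter at most d and maximum degree Δ > C, the distance query complexity q of G satisfies q·(d−1+ε)·Δ^{d−2} ≥ binom(n,2) − |E(G)|. -/

import Mathlib

open SimpleGraph Finset

/-- `Q` reconstructs `G` if `G` is the unique graph on `[n]` with the given distances on
all queried pairs. -/
def Reconstructs {n : ℕ} (G : SimpleGraph (Fin n)) (Q : Finset (Sym2 (Fin n))) : Prop :=
  ∀ G' : SimpleGraph (Fin n),
    (∀ x y : Fin n, s(x, y) ∈ Q → G'.dist x y = G.dist x y) → G' = G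

/-- The distance query complexity of `G`: the minimum size of a query set that
reconstructs `G`. -/
noncomputable def queryComplexity {n : ℕ} (G : SimpleGraph (Fin n)) : ℕ :=
  sInf {q : ℕ | ∃ Q : Finset (Sym2 (Fin n)), Q.card = q ∧ Reconstructs G Q}

lemma walk_decomp {V : Type*} {G : SimpleGraph V} (u v : V) :
    ∀ (n : ℕ) (a b : V) (W : (G ⊔ SimpleGraph.edge u v).Walk a b), W.length ≤ n →
    (∃ P : G.Walk a b, P.length ≤ n) ∨
    (∃ p q, ((p = u ∧ q = v) ∨ (p = v ∧ q = u)) ∧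
      ∃ (P : G.Walk a p) (Q : G.Walk q b), P.length + 1 + Q.length ≤ n) := by
  intro n
  induction n with
  | zero =>
    intro a b W hW
    cases W with
    | nil => exact Or.inl ⟨SimpleGraph.Walk.nil, le_refl _⟩
    | cons h W' => simp at hW
  | succ n IH =>
    intro a b W hW
    cases W with
    | nil => exact Or.inl ⟨SimpleGraph.Walk.nil, Nat.zero_le _⟩
    | @cons _ c _ h W' =>
      have hW' : W'.length ≤ n := by
        simpa [Nat.succ_le_succ_iff] using hW
      by_cases hac : G.Adj a c
      · rcases IH c b W' hW' with ⟨P, hP⟩ | ⟨p, q, hpq, P, Q, hPQ⟩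
        · exact Or.inl ⟨SimpleGraph.Walk.cons hac P, by simpa using Nat.succ_le_succ hP⟩
        · exact Or.inr ⟨p, q, hpq, SimpleGraph.Walk.cons hac P, Q, by
            simp only [SimpleGraph.Walk.length_cons]; omega⟩
      · have he : (a = u ∧ c = v) ∨ (a = v ∧ c = u) := by
          rcases h with h | h
          · exact absurd h hac
          · exact ((SimpleGraph.edge_adj u v a c).mp h).1
        rcases IH c b W' hW' with ⟨P, hP⟩ | ⟨p, q, hpq, P, Q, hPQ⟩
        · exact Or.inr ⟨a, c, he, SimpleGraph.Walk.nil, P, by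
            simp only [SimpleGraph.Walk.length_nil]; omega⟩
        · -- p,q ∈ {u,v}, a,c ∈ {u,v}; either (p,q) = (a,c) or (p,q) = (c,a)
          have : (p = a ∧ q = c) ∨ (p = c ∧ q = a) := by
            rcases hpq with ⟨hp, hq⟩ | ⟨hp, hq⟩ <;> rcases he with ⟨ha, hc⟩ | ⟨ha, hc⟩ <;>
              subst_vars <;> simp
          rcases this with ⟨hp, hq⟩ | ⟨hp, hq⟩
          · subst hp; subst hq
            exact Or.inr ⟨p, q, he, SimpleGraph.Walk.nil, Q, by
              simp only [SimpleGraph.Walk.length_nil]; omega⟩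
          · subst hp; subst hq
            exact Or.inl ⟨Q, by omega⟩

lemma dist_change {V : Type*} {G : SimpleGraph V} (hc : G.Connected) {u v x y : V}
    (h : (G ⊔ SimpleGraph.edge u v).dist x y ≠ G.dist x y) :
    ∃ p q, ((p = u ∧ q = v) ∨ (p = v ∧ q = u)) ∧
      G.dist x p + 1 + G.dist q y < G.dist x y := by
  have hle : (G ⊔ SimpleGraph.edge u v).dist x y ≤ G.dist x y := by
    obtain ⟨P, hP⟩ := hc.exists_walk_length_eq_dist x y
    calc (G ⊔ SimpleGraph.edge u v).dist x y ≤ (P.mapLe le_sup_left).length :=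
          SimpleGraph.dist_le _
      _ = G.dist x y := by rw [SimpleGraph.Walk.length_map]; exact hP
  have hlt : (G ⊔ SimpleGraph.edge u v).dist x y < G.dist x y := lt_of_le_of_ne hle h
  have hc' : (G ⊔ SimpleGraph.edge u v).Connected := hc.mono le_sup_left
  obtain ⟨W, hW⟩ := hc'.exists_walk_length_eq_dist x y
  rcases walk_decomp u v ((G ⊔ SimpleGraph.edge u v).dist x y) x y W (le_of_eq hW)
    with ⟨P, hP⟩ | ⟨p, q, hpq, P, Q, hPQ⟩
  · exact absurd (le_trans (SimpleGraph.dist_le P) hP) (not_le.mpr hlt)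
  · refine ⟨p, q, hpq, ?_⟩
    have h1 := SimpleGraph.dist_le P
    have h2 := SimpleGraph.dist_le Q
    omega

lemma sphere_card {V : Type*} [Fintype V] [DecidableEq V] {G : SimpleGraph V}
    [DecidableRel G.Adj] (hc : G.Connected) (x : V) (i : ℕ) :
    (univ.filter (fun w => G.dist x w = i)).card ≤ G.maxDegree ^ i := by
  induction i with
  | zero =>
    have : (univ.filter (fun w => G.dist x w = 0)) ⊆ {x} := by
      intro w hw
      simp only [mem_filter] at hw
      simp [(hc.dist_eq_zero_iff.mp hw.2).symm]
    simpa using Finset.card_le_card this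
  | succ i IH =>
    have hsub : (univ.filter (fun w => G.dist x w = i + 1)) ⊆
        (univ.filter (fun w => G.dist x w = i)).biUnion (fun w' => G.neighborFinset w') := by
      intro w hw
      simp only [mem_filter] at hw
      have hr : G.Reachable x w := hc x w
      obtain ⟨P, hP⟩ := hr.exists_walk_length_eq_dist
      have hP' : P.reverse.length = i + 1 := by rw [SimpleGraph.Walk.length_reverse]; omega
      cases hrev : P.reverse with
      | nil => rw [hrev] at hP'; simp at hP'
      | @cons _ c _ hadj W' =>
        rw [hrev] at hP'
        simp only [SimpleGraph.Walk.length_cons] at hP'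
        have hdc : G.dist x c ≤ i := by
          have := SimpleGraph.dist_le W'.reverse
          rw [SimpleGraph.Walk.length_reverse] at this
          omega
        have hdc2 : G.dist x c = i := by
          have htri := hc.dist_triangle (u := x) (v := c) (w := w)
          have : G.dist c w ≤ 1 := SimpleGraph.dist_le hadj.symm.toWalk
          omega
        simp only [mem_biUnion, mem_filter, SimpleGraph.mem_neighborFinset]
        exact ⟨c, ⟨mem_univ c, hdc2⟩, hadj.symm⟩
    calc (univ.filter (fun w => G.dist x w = i + 1)).card
        ≤ _ := Finset.card_le_card hsub
      _ ≤ (univ.filter (fun w => G.dist x w = i)).card * G.maxDegree := by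
          apply Finset.card_biUnion_le_card_mul
          intro w' _
          simpa [SimpleGraph.card_neighborFinset_eq_degree] using G.degree_le_maxDegree w'
      _ ≤ G.maxDegree ^ i * G.maxDegree := Nat.mul_le_mul_right _ IH
      _ = G.maxDegree ^ (i + 1) := (pow_succ _ _).symm

lemma reconstructs_univ {n : ℕ} (G : SimpleGraph (Fin n)) : Reconstructs G univ := by
  intro G' h
  ext x y
  rw [← SimpleGraph.dist_eq_one_iff_adj, ← SimpleGraph.dist_eq_one_iff_adj,
    h x y (mem_univ _)]

lemma exists_min_query {n : ℕ} (G : SimpleGraph (Fin n)) :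
    ∃ Q : Finset (Sym2 (Fin n)), Q.card = queryComplexity G ∧ Reconstructs G Q := by
  have hne : {q : ℕ | ∃ Q : Finset (Sym2 (Fin n)), Q.card = q ∧ Reconstructs G Q}.Nonempty :=
    ⟨_, univ, rfl, reconstructs_univ G⟩
  exact Nat.sInf_mem hne

lemma compl_edge_card {n : ℕ} (G : SimpleGraph (Fin n)) [DecidableRel G.Adj]
    [Fintype G.edgeSet] :
    Gᶜ.edgeFinset.card = n.choose 2 - G.edgeFinset.card := by
  classical
  have h1 : Gᶜ = (⊤ : SimpleGraph (Fin n)) \ G := by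
    ext a b; simp [SimpleGraph.sdiff_adj, SimpleGraph.compl_adj]
  have h2 : Gᶜ.edgeFinset = (⊤ : SimpleGraph (Fin n)).edgeFinset \ G.edgeFinset := by
    rw [← SimpleGraph.edgeFinset_sdiff, ← SimpleGraph.edgeFinset_inj.mpr h1]
  rw [h2, Finset.card_sdiff_of_subset (SimpleGraph.edgeFinset_mono le_top)]
  congr 1
  simpa using SimpleGraph.card_edgeFinset_top_eq_card_choose_two (V := Fin n)

lemma count_main {n d : ℕ} (hd : 3 ≤ d) {G : SimpleGraph (Fin n)} [DecidableRel G.Adj]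
    [Fintype G.edgeSet] (hc : G.Connected) (hdiam : ∀ u v : Fin n, G.dist u v ≤ d) :
    Gᶜ.edgeFinset.card ≤ queryComplexity G *
      ∑ k ∈ range (d - 1), (k + 1) * G.maxDegree ^ k := by
  classical
  obtain ⟨Q, hQcard, hQrec⟩ := exists_min_query G
  set N := Gᶜ.edgeFinset with hN
  -- Good predicate
  set Good : Sym2 (Fin n) → Sym2 (Fin n) → Prop :=
    fun e e' => ∃ x y p q : Fin n, e' = s(x, y) ∧ e = s(p, q) ∧
      G.dist x p + G.dist q y + 2 ≤ d with hGood
  have key : ∀ e ∈ N, ∃ e' ∈ Q, Good e e' := by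
    intro e he
    induction e using Sym2.ind with
    | _ u v =>
      rw [hN, SimpleGraph.mem_edgeFinset, SimpleGraph.mem_edgeSet, SimpleGraph.compl_adj] at he
      obtain ⟨huv, hnadj⟩ := he
      have hne : G ⊔ SimpleGraph.edge u v ≠ G := by
        intro hEq
        apply hnadj
        have : (G ⊔ SimpleGraph.edge u v).Adj u v :=
          Or.inr ((SimpleGraph.edge_adj u v u v).mpr ⟨Or.inl ⟨rfl, rfl⟩, huv⟩)
        rwa [hEq] at this
      have : ¬ (∀ x y : Fin n, s(x, y) ∈ Q →
          (G ⊔ SimpleGraph.edge u v).dist x y = G.dist x y) := fun hcontra =>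
        hne (hQrec _ hcontra)
      push_neg at this
      obtain ⟨x, y, hxyQ, hdist⟩ := this
      obtain ⟨p, q, hpq, hlt⟩ := dist_change hc hdist
      refine ⟨s(x, y), hxyQ, x, y, p, q, rfl, ?_, ?_⟩
      · rcases hpq with ⟨hp, hq⟩ | ⟨hp, hq⟩ <;> subst hp <;> subst hq
        · rfl
        · exact Sym2.eq_swap
      · have := hdiam x y; omega
  have hNsub : N ⊆ Q.biUnion (fun e' => N.filter (fun e => Good e e')) := by
    intro e he
    obtain ⟨e', he'Q, hg⟩ := key e he
    exact Finset.mem_biUnion.mpr ⟨e', he'Q, Finset.mem_filter.mpr ⟨he, hg⟩⟩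
  have hcard : N.card ≤ ∑ e' ∈ Q, (N.filter (fun e => Good e e')).card :=
    (Finset.card_le_card hNsub).trans Finset.card_biUnion_le
  have fiber_bound : ∀ e' ∈ Q,
      (N.filter (fun e => Good e e')).card ≤
        ∑ k ∈ range (d - 1), (k + 1) * G.maxDegree ^ k := by
    intro e' _
    induction e' using Sym2.ind with
    | _ x₀ y₀ =>
      set T : Finset (Fin n × Fin n) :=
        univ.filter (fun ab => G.dist x₀ ab.1 + G.dist ab.2 y₀ + 2 ≤ d) with hT
      -- fiber injects into T
      have hstep : ∀ e ∈ N.filter (fun e => Good e s(x₀, y₀)),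
          ∃ ab ∈ T, e = s(ab.1, ab.2) := by
        intro e he
        rw [Finset.mem_filter] at he
        obtain ⟨x, y, p, q, hxy, hepq, hle⟩ := he.2
        rcases Sym2.eq_iff.mp hxy.symm with ⟨hx, hy⟩ | ⟨hx, hy⟩
        · subst hx; subst hy
          exact ⟨(p, q), by simp [hT, hle], hepq⟩
        · subst hx; subst hy
          refine ⟨(q, p), ?_, hepq.trans Sym2.eq_swap⟩
          simp only [hT, mem_filter, mem_univ, true_and]
          rw [SimpleGraph.dist_comm, SimpleGraph.dist_comm (u := p)]
          omega
      have hfiber_le : (N.filter (fun e => Good e s(x₀, y₀))).card ≤ T.card := by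
        have hsub : N.filter (fun e => Good e s(x₀, y₀)) ⊆
            T.image (fun ab => s(ab.1, ab.2)) := by
          intro e he
          obtain ⟨ab, habT, habe⟩ := hstep e he
          exact Finset.mem_image.mpr ⟨ab, habT, habe.symm⟩
        exact (Finset.card_le_card hsub).trans Finset.card_image_le
      -- T bound via spheres
      have hTsub : T ⊆ (range (d - 1)).biUnion (fun k =>
          (Finset.HasAntidiagonal.antidiagonal k).biUnion (fun ij =>
            (univ.filter (fun w => G.dist x₀ w = ij.1)) ×ˢ
            (univ.filter (fun w => G.dist y₀ w = ij.2)))) := by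
        intro ab hab
        simp only [hT, mem_filter, mem_univ, true_and] at hab
        simp only [mem_biUnion, Finset.mem_range, Finset.HasAntidiagonal.mem_antidiagonal, mem_product,
          mem_filter, mem_univ, true_and]
        exact ⟨G.dist x₀ ab.1 + G.dist ab.2 y₀, by omega,
          (G.dist x₀ ab.1, G.dist ab.2 y₀), rfl, rfl, SimpleGraph.dist_comm⟩
      have hTcard : T.card ≤ ∑ k ∈ range (d - 1), (k + 1) * G.maxDegree ^ k := by
        calc T.card ≤ ∑ k ∈ range (d - 1), ((Finset.HasAntidiagonal.antidiagonal k).biUnion (fun ij =>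
              (univ.filter (fun w => G.dist x₀ w = ij.1)) ×ˢ
              (univ.filter (fun w => G.dist y₀ w = ij.2)))).card :=
            (Finset.card_le_card hTsub).trans (Finset.card_biUnion_le)
          _ ≤ ∑ k ∈ range (d - 1), (k + 1) * G.maxDegree ^ k := by
            apply Finset.sum_le_sum
            intro k _
            calc ((Finset.HasAntidiagonal.antidiagonal k).biUnion _).card
                ≤ ∑ ij ∈ Finset.HasAntidiagonal.antidiagonal k,
                  ((univ.filter (fun w => G.dist x₀ w = ij.1)) ×ˢ
                   (univ.filter (fun w => G.dist y₀ w = ij.2))).card :=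
                Finset.card_biUnion_le
              _ ≤ ∑ ij ∈ Finset.HasAntidiagonal.antidiagonal k, G.maxDegree ^ k := by
                  apply Finset.sum_le_sum
                  intro ij hij
                  rw [Finset.card_product]
                  have h1 := sphere_card hc x₀ ij.1
                  have h2 := sphere_card hc y₀ ij.2
                  calc _ ≤ G.maxDegree ^ ij.1 * G.maxDegree ^ ij.2 :=
                        Nat.mul_le_mul h1 h2
                    _ = G.maxDegree ^ k := by
                        rw [← pow_add]
                        congr 1
                        exact Finset.HasAntidiagonal.mem_antidiagonal.mp hij
              _ = (k + 1) * G.maxDegree ^ k := by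
                  rw [Finset.sum_const, Finset.Nat.card_antidiagonal, smul_eq_mul]
      exact hfiber_le.trans hTcard
  calc N.card ≤ _ := hcard
    _ ≤ ∑ _e' ∈ Q, ∑ k ∈ range (d - 1), (k + 1) * G.maxDegree ^ k :=
        Finset.sum_le_sum fiber_bound
    _ = Q.card * ∑ k ∈ range (d - 1), (k + 1) * G.maxDegree ^ k := by
        rw [Finset.sum_const, smul_eq_mul]
    _ = _ := by rw [hQcard]

/-- For every `d ≥ 3` and `ε > 0` there is `C > 0` such that every connected graph on
`[n]` of diameter at most `d` and maximum degree `Δ > C` has query complexity `q`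
satisfying `q (d-1+ε) Δ^{d-2} ≥ binom(n,2) - |E(G)|`. -/
theorem stmt3 (d : ℕ) (hd : 3 ≤ d) (ε : ℝ) (hε : 0 < ε) :
    ∃ C : ℝ, 0 < C ∧ ∀ (n : ℕ) (G : SimpleGraph (Fin n)) [DecidableRel G.Adj]
      [Fintype G.edgeSet], G.Connected → (∀ u v : Fin n, G.dist u v ≤ d) →
      C < (G.maxDegree : ℝ) →
      (n.choose 2 : ℝ) - G.edgeFinset.card ≤
        (queryComplexity G : ℝ) * ((d : ℝ) - 1 + ε) * (G.maxDegree : ℝ) ^ (d - 2) := by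
  refine ⟨max 1 ((d : ℝ) ^ 2 / ε), lt_of_lt_of_le one_pos (le_max_left _ _), ?_⟩
  intro n G _ _ hconn hdiam hC
  set D : ℝ := (G.maxDegree : ℝ) with hD
  have hD1 : (1 : ℝ) ≤ D := le_of_lt (lt_of_le_of_lt (le_max_left _ _) hC)
  have hD0 : (0 : ℝ) ≤ D := le_trans zero_le_one hD1
  have hd2 : (d : ℝ) ^ 2 ≤ ε * D := by
    have h := le_of_lt (lt_of_le_of_lt (le_max_right 1 ((d : ℝ) ^ 2 / ε)) hC)
    rw [div_le_iff₀ hε] at h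
    linarith [h]
  -- natural-number main inequality
  have hmain := count_main hd hconn hdiam
  -- sum bound in ℝ
  have hsum : ((∑ k ∈ range (d - 1), (k + 1) * G.maxDegree ^ k : ℕ) : ℝ) ≤
      ((d : ℝ) - 1 + ε) * D ^ (d - 2) := by
    have hsucc : d - 1 = (d - 2) + 1 := by omega
    push_cast
    rw [hsucc, Finset.sum_range_succ]
    have hlast : ((d - 2 : ℕ) : ℝ) + 1 = (d : ℝ) - 1 := by
      have : ((d - 2 : ℕ) : ℝ) = (d : ℝ) - 2 := by
        push_cast [Nat.cast_sub (by omega : 2 ≤ d)]; ring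
      rw [this]; ring
    have hrest : ∑ k ∈ range (d - 2), ((k : ℝ) + 1) * D ^ k ≤ ε * D ^ (d - 2) := by
      have hterm : ∀ k ∈ range (d - 2), ((k : ℝ) + 1) * D ^ k ≤
          ((d : ℝ) - 2) * D ^ (d - 3) := by
        intro k hk
        rw [Finset.mem_range] at hk
        have h1 : ((k : ℝ) + 1) ≤ (d : ℝ) - 2 := by
          have : (k : ℝ) + 1 ≤ ((d - 2 : ℕ) : ℝ) := by exact_mod_cast Nat.succ_le_of_lt hk
          rw [show ((d - 2 : ℕ) : ℝ) = (d : ℝ) - 2 by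
            push_cast [Nat.cast_sub (by omega : 2 ≤ d)]; ring] at this
          exact this
        have h2 : D ^ k ≤ D ^ (d - 3) := pow_le_pow_right₀ hD1 (by omega)
        have h3 : (0 : ℝ) ≤ D ^ k := pow_nonneg hD0 _
        nlinarith
      calc ∑ k ∈ range (d - 2), ((k : ℝ) + 1) * D ^ k
          ≤ ∑ _k ∈ range (d - 2), ((d : ℝ) - 2) * D ^ (d - 3) := Finset.sum_le_sum hterm
        _ = ((d - 2 : ℕ) : ℝ) * (((d : ℝ) - 2) * D ^ (d - 3)) := by
            rw [Finset.sum_const, nsmul_eq_mul, Finset.card_range]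
        _ ≤ ((d : ℝ)) * (((d : ℝ)) * D ^ (d - 3)) := by
            have hcast : ((d - 2 : ℕ) : ℝ) = (d : ℝ) - 2 := by
              push_cast [Nat.cast_sub (by omega : 2 ≤ d)]; ring
            rw [hcast]
            have hx : (0 : ℝ) ≤ D ^ (d - 3) := pow_nonneg hD0 _
            have h5 : (0:ℝ) ≤ ((d:ℝ) - 2) := by
              have : (3:ℝ) ≤ (d:ℝ) := by exact_mod_cast hd
              linarith
            nlinarith
        _ = (d : ℝ) ^ 2 * D ^ (d - 3) := by ring
        _ ≤ ε * D * D ^ (d - 3) := by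
            have : (0 : ℝ) ≤ D ^ (d - 3) := pow_nonneg hD0 _
            nlinarith
        _ = ε * D ^ (d - 2) := by
            rw [mul_assoc, ← pow_succ']
            congr 2
            omega
    rw [hlast]
    linarith
  -- put it together
  have hq0 : (0 : ℝ) ≤ (queryComplexity G : ℝ) := Nat.cast_nonneg _
  have hEle : G.edgeFinset.card ≤ n.choose 2 := by
    have := G.card_edgeFinset_le_card_choose_two
    rwa [Fintype.card_fin] at this
  have hlhs : (n.choose 2 : ℝ) - G.edgeFinset.card = (Gᶜ.edgeFinset.card : ℝ) := by
    rw [compl_edge_card G, Nat.cast_sub hEle]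
  rw [hlhs]
  calc (Gᶜ.edgeFinset.card : ℝ)
      ≤ ((queryComplexity G * ∑ k ∈ range (d - 1), (k + 1) * G.maxDegree ^ k : ℕ) : ℝ) := by
        exact_mod_cast hmain
    _ = (queryComplexity G : ℝ) *
        ((∑ k ∈ range (d - 1), (k + 1) * G.maxDegree ^ k : ℕ) : ℝ) := by push_cast; ring
    _ ≤ (queryComplexity G : ℝ) * (((d : ℝ) - 1 + ε) * D ^ (d - 2)) :=
        mul_le_mul_of_nonneg_left hsum hq0
    _ = (queryComplexity G : ℝ) * ((d : ℝ) - 1 + ε) * D ^ (d - 2) := by ring
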